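/- Define f : [0,1] → 2^[0,1] by f(x) = {1/4, 3x/4 + 1/4}. Then f is upper semicontinuous, has connected graph, and has the Weak Intermediate Value Property, but f is not surjective: no y ∈ [0, 1/4) belongs to f(x) for any x ∈ [0,1]. -/

import Mathlib

open Set

/-- Graph of a set-valued function on [0,1]. -/
def SVGraph (f : ℝ → Set ℝ) : Set (ℝ × ℝ) :=
  {p | p.1 ∈ Icc (0:ℝ) 1 ∧ p.2 ∈ f p.1}

/-- f has nonempty compact values contained in [0,1]. -/
def SV (f : ℝ → Set ℝ) : Prop :=
  ∀ x ∈ Icc (0:ℝ) 1, (f x).Nonempty ∧ IsCompact (f x) ∧ f x ⊆ Icc (0:ℝ) 1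

/-- Upper semicontinuity on [0,1]. -/
def USC (f : ℝ → Set ℝ) : Prop :=
  ∀ x ∈ Icc (0:ℝ) 1, ∀ U : Set ℝ, IsOpen U → f x ⊆ U →
    ∃ V : Set ℝ, IsOpen V ∧ x ∈ V ∧ ∀ v ∈ V ∩ Icc (0:ℝ) 1, f v ⊆ U

/-- Weak Intermediate Value Property. -/
def WIVP (f : ℝ → Set ℝ) : Prop :=
  ∀ x₁ ∈ Icc (0:ℝ) 1, ∀ x₂ ∈ Icc (0:ℝ) 1, x₁ ≠ x₂ → ∀ y₁ ∈ f x₁,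
    ∃ y₂ ∈ f x₂, ∀ y ∈ uIcc y₁ y₂, ∃ x ∈ uIcc x₁ x₂, y ∈ f x

/-- Intermediate Value Property. -/
def IVP (f : ℝ → Set ℝ) : Prop :=
  ∀ x₁ ∈ Icc (0:ℝ) 1, ∀ x₂ ∈ Icc (0:ℝ) 1, x₁ ≠ x₂ → ∀ y₁ ∈ f x₁, ∀ y₂ ∈ f x₂, y₁ ≠ y₂ →
    ∀ y ∈ Ioo (min y₁ y₂) (max y₁ y₂), ∃ x ∈ Ioo (min x₁ x₂) (max x₁ x₂), y ∈ f x

noncomputable def fNotSurj (x : ℝ) : Set ℝ := {1/4, 3*x/4 + 1/4}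

theorem stmt11 :
    USC fNotSurj ∧
    IsConnected (SVGraph fNotSurj) ∧
    WIVP fNotSurj ∧
    (∀ y ∈ Ico (0:ℝ) (1/4), ∀ x ∈ Icc (0:ℝ) 1, y ∉ fNotSurj x) := by
  refine ⟨?_, ?_, ?_, ?_⟩
  · -- USC
    intro x hx U hU hfU
    refine ⟨(fun v : ℝ => 3*v/4 + 1/4) ⁻¹' U, hU.preimage (by continuity), ?_, ?_⟩
    · exact hfU (by simp [fNotSurj])
    · intro v hv y hy
      rcases hy with rfl | rfl
      · exact hfU (by simp [fNotSurj])
      · exact hv.1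
  · -- Connected graph
    have hA : IsConnected ((fun x : ℝ => (x, (1:ℝ)/4)) '' Icc 0 1) :=
      (isConnected_Icc (by norm_num)).image _ (Continuous.continuousOn (by continuity))
    have hB : IsConnected ((fun x : ℝ => (x, 3*x/4 + 1/4)) '' Icc 0 1) :=
      (isConnected_Icc (by norm_num)).image _ (Continuous.continuousOn (by continuity))
    have heq : SVGraph fNotSurj =
        ((fun x : ℝ => (x, (1:ℝ)/4)) '' Icc 0 1) ∪ ((fun x : ℝ => (x, 3*x/4 + 1/4)) '' Icc 0 1) := by
      ext ⟨a, b⟩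
      constructor
      · rintro ⟨ha, hb⟩
        rcases hb with hb | hb
        · exact Or.inl ⟨a, ha, Prod.ext rfl hb.symm⟩
        · exact Or.inr ⟨a, ha, Prod.ext rfl hb.symm⟩
      · rintro (⟨x, hx, hxy⟩ | ⟨x, hx, hxy⟩) <;>
          (cases hxy; exact ⟨hx, by simp [fNotSurj]⟩)
    rw [heq]
    apply IsConnected.union ?_ hA hB
    refine ⟨((0:ℝ), (1:ℝ)/4), ⟨0, ?_, rfl⟩, ⟨0, ?_, by norm_num⟩⟩ <;>
      simp
  · -- WIVP
    intro x₁ hx₁ x₂ hx₂ hne y₁ hy₁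
    rcases hy₁ with rfl | rfl
    · refine ⟨1/4, by simp [fNotSurj], ?_⟩
      intro y hy
      rw [uIcc_self, mem_singleton_iff] at hy
      subst hy
      exact ⟨x₁, left_mem_uIcc, by simp [fNotSurj]⟩
    · refine ⟨3*x₂/4 + 1/4, by simp [fNotSurj], ?_⟩
      intro y hy
      refine ⟨4*(y - 1/4)/3, ?_, ?_⟩
      · rw [mem_uIcc] at hy ⊢
        rcases hy with ⟨h1, h2⟩ | ⟨h1, h2⟩
        · left; constructor <;> linarith
        · right; constructor <;> linarith
      · right; simp; ring
  · -- not surjective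
    intro y hy x hx h
    rcases h with rfl | rfl
    · exact absurd hy.2 (by norm_num)
    · have := hx.1
      have := hy.2
      linarith
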